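/- arXiv:math/0506335 — 2 statements merged into one kernel-verified Lean document; each statement's English description precedes it below -/
import Mathlib

section
/- (Factorial Jacobi–Trudi identity, dual version) For a partition λ whose parts are at most m−p and whose conjugate λ' has at most m−p parts (λ contained in the p×(m−p) rectangle), s_λ(x|a) = det[ e_{λ'_i − i + j}(x | τ^{j−1}a) ]_{1 ≤ i,j ≤ m−p}, where e_k(x|a) is the factorial elementary function in p variables. -/
open Finset
open scoped Classical

noncomputable section

variable {R : Type*} [CommRing R]

/-- shifted sequence: `(τ^s a)_n = a_{n+s}` -/
def shiftSeq (a : ℤ → R) (s : ℤ) : ℤ → R := fun n => a (n + s)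

/-- factorial complete homogeneous function `h_k(x|a)`
    (`= Σ_{1≤i_1≤...≤i_k≤p} ∏_r (x_{i_r} - a_{i_r + r - 1})`, `0` for `k < 0`) -/
def fh (p : ℕ) (x : Fin p → R) (a : ℤ → R) (k : ℤ) : R :=
  if 0 ≤ k then
    ∑ f ∈ Finset.univ.filter (fun f : Fin k.toNat → Fin p => Monotone f),
      ∏ r : Fin k.toNat, (x (f r) - a (((f r : ℕ) : ℤ) + ((r : ℕ) : ℤ) + 1))
  else 0

/-- factorial elementary function `e_k(x|a)`
    (`= Σ_{1≤i_1<...<i_k≤p} ∏_r (x_{i_r} - a_{i_r - r + 1})`, `0` for `k < 0`;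
    it vanishes automatically for `k > p`) -/
def fe (p : ℕ) (x : Fin p → R) (a : ℤ → R) (k : ℤ) : R :=
  if 0 ≤ k then
    ∑ f ∈ Finset.univ.filter (fun f : Fin k.toNat → Fin p => StrictMono f),
      ∏ r : Fin k.toNat, (x (f r) - a (((f r : ℕ) : ℤ) - ((r : ℕ) : ℤ) + 1))
  else 0

/-- generalized factorial power `(y|a)^k = (y - a_1)⋯(y - a_k)` -/
def gfp (y : R) (a : ℤ → R) (k : ℕ) : R :=
  ∏ i ∈ Finset.range k, (y - a ((i : ℤ) + 1))

/-- the factorial Schur polynomial `s_λ(x|a)`, defined through the factorial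
    Jacobi-Trudi determinant `det( h_{λ_i - i + j}(x | τ^{1-j} a) )_{1≤i,j≤p}` -/
def fschur (p : ℕ) (lam : Fin p → ℕ) (x : Fin p → R) (a : ℤ → R) : R :=
  Matrix.det (Matrix.of fun i j : Fin p =>
    fh p x (shiftSeq a (-((j : ℕ) : ℤ))) (((lam i : ℕ) : ℤ) - ((i : ℕ) : ℤ) + ((j : ℕ) : ℤ)))

/-- natural-number indexed version of `fe` -/
def feN (p k : ℕ) (x : Fin p → R) (a : ℤ → R) : R :=
  ∑ f ∈ Finset.univ.filter (fun f : Fin k → Fin p => StrictMono f),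
    ∏ r : Fin k, (x (f r) - a (((f r : ℕ) : ℤ) - ((r : ℕ) : ℤ) + 1))

lemma fe_natCast (p : ℕ) (x : Fin p → R) (a : ℤ → R) (k : ℕ) :
    fe p x a (k : ℤ) = feN p k x a := by
  rw [fe, if_pos (by exact_mod_cast Nat.zero_le k)]; rfl

lemma fe_of_neg (p : ℕ) (x : Fin p → R) (a : ℤ → R) {k : ℤ} (hk : k < 0) :
    fe p x a k = 0 := by
  rw [fe, if_neg (not_le.mpr hk)]

lemma feN_zero (p : ℕ) (x : Fin p → R) (a : ℤ → R) : feN p 0 x a = 1 := by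
  rw [feN]
  rw [Finset.filter_true_of_mem (fun f _ => Subsingleton.strictMono f)]
  simp

lemma feN_overflow (p k : ℕ) (hk : p < k) (x : Fin p → R) (a : ℤ → R) :
    feN p k x a = 0 := by
  rw [feN]
  apply Finset.sum_eq_zero
  intro f hf
  exfalso
  have hmono : StrictMono f := (Finset.mem_filter.mp hf).2
  have := Fintype.card_le_of_injective f hmono.injective
  simp at this; omega

lemma fe_zero' (p : ℕ) (x : Fin p → R) (a : ℤ → R) : fe p x a 0 = 1 := by
  have := fe_natCast p x a 0
  simpa [feN_zero] using this

lemma fe_overflow (p : ℕ) (x : Fin p → R) (a : ℤ → R) {k : ℤ} (hk : (p : ℤ) < k) :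
    fe p x a k = 0 := by
  have h0 : (0:ℤ) ≤ k := le_trans (by positivity) hk.le
  obtain ⟨n, rfl⟩ : ∃ n : ℕ, (n : ℤ) = k := ⟨k.toNat, Int.toNat_of_nonneg h0⟩
  rw [fe_natCast]
  exact feN_overflow p n (by exact_mod_cast hk) x a

lemma gfp_add (y : R) (a : ℤ → R) (s n : ℕ) :
    gfp y a (s + n) = gfp y a s * gfp y (shiftSeq a (s : ℤ)) n := by
  rw [gfp, gfp, gfp, Finset.prod_range_add]
  congr 1
  apply Finset.prod_congr rfl
  intro i _
  congr 1
  simp only [shiftSeq]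
  congr 1
  push_cast
  ring



lemma feN_succ (p k : ℕ) (x : Fin (p+1) → R) (a : ℤ → R) :
    feN (p+1) (k+1) x a =
      feN p (k+1) (x ∘ Fin.castSucc) a
        + (x (Fin.last p) - a ((p:ℤ) - (k:ℤ) + 1)) * feN p k (x ∘ Fin.castSucc) a := by
  rw [feN]
  rw [← Finset.sum_filter_add_sum_filter_not _
    (fun f : Fin (k+1) → Fin (p+1) => f (Fin.last k) = Fin.last p)]
  rw [Finset.filter_filter, Finset.filter_filter, add_comm]
  congr 1
  · -- part A : functions avoiding the top
    rw [feN]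
    refine Finset.sum_bij'
      (fun (f : Fin (k+1) → Fin (p+1)) hf => fun r : Fin (k+1) =>
        Fin.castLT (f r) (by
          have hsm : StrictMono f := (Finset.mem_filter.mp hf).2.1
          have hne : f (Fin.last k) ≠ Fin.last p := (Finset.mem_filter.mp hf).2.2
          have h1 : f r ≤ f (Fin.last k) := hsm.monotone (Fin.le_last r)
          have h2 : f (Fin.last k) < Fin.last p := lt_of_le_of_ne (Fin.le_last _) hne
          have h3 := lt_of_le_of_lt h1 h2
          rw [Fin.lt_def, Fin.val_last] at h3
          exact h3))
      (fun (g : Fin (k+1) → Fin p) _ => Fin.castSucc ∘ g)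
      ?hiA ?hjA ?liA ?riA ?valA
    case hiA =>
      intro f hf
      have hsm : StrictMono f := (Finset.mem_filter.mp hf).2.1
      simp only [Finset.mem_filter, Finset.mem_univ, true_and]
      intro r s hrs
      simp only [Fin.lt_def, Fin.coe_castLT]
      exact hsm hrs
    case hjA =>
      intro g hg
      have hsm : StrictMono g := (Finset.mem_filter.mp hg).2
      simp only [Finset.mem_filter, Finset.mem_univ, true_and]
      refine ⟨fun r s hrs => ?_, Fin.ne_of_lt (Fin.castSucc_lt_last _)⟩
      simp only [Function.comp_apply, Fin.lt_def, Fin.coe_castSucc]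
      exact hsm hrs
    case liA =>
      intro f hf; funext r; simp [Fin.castSucc_castLT]
    case riA =>
      intro g hg; funext r; apply Fin.ext
      simp
    case valA =>
      intro f hf
      apply Finset.prod_congr rfl
      intro r _
      simp
  · -- part B : functions hitting the top
    rw [feN, Finset.mul_sum]
    refine Finset.sum_bij'
      (fun (f : Fin (k+1) → Fin (p+1)) hf => fun r : Fin k =>
        Fin.castLT (f r.castSucc) (by
          have hsm : StrictMono f := (Finset.mem_filter.mp hf).2.1
          have heq : f (Fin.last k) = Fin.last p := (Finset.mem_filter.mp hf).2.2
          have h1 : f r.castSucc < f (Fin.last k) := hsm (Fin.castSucc_lt_last r)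
          rw [heq, Fin.lt_def, Fin.val_last] at h1
          exact h1))
      (fun (g : Fin k → Fin p) _ => fun r : Fin (k+1) =>
        if h : r = Fin.last k then Fin.last p else Fin.castSucc (g (r.castPred h)))
      ?hiB ?hjB ?liB ?riB ?valB
    case hiB =>
      intro f hf
      have hsm : StrictMono f := (Finset.mem_filter.mp hf).2.1
      simp only [Finset.mem_filter, Finset.mem_univ, true_and]
      intro r s hrs
      simp only [Fin.lt_def, Fin.coe_castLT]
      exact hsm (by simp only [Fin.lt_def, Fin.coe_castSucc]; exact hrs)
    case hjB =>
      intro g hg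
      have hsm : StrictMono g := (Finset.mem_filter.mp hg).2
      simp only [Finset.mem_filter, Finset.mem_univ, true_and]
      constructor
      · intro r s hrs
        by_cases hs : s = Fin.last k
        · subst hs
          have hr : r ≠ Fin.last k := Fin.ne_of_lt hrs
          simp only [dif_pos rfl, dif_neg hr]
          exact Fin.castSucc_lt_last _
        · have hr : r ≠ Fin.last k := by
            intro h; subst h
            exact absurd hrs (not_lt.mpr (Fin.le_last s))
          simp only [dif_neg hr, dif_neg hs]
          have h1 : r.castPred hr < s.castPred hs := by
            simp only [Fin.lt_def, Fin.coe_castPred]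
            exact hrs
          have h2 := hsm h1
          simp only [Fin.lt_def, Fin.coe_castSucc]
          exact h2
      · simp
    case liB =>
      intro f hf; funext r
      have heq : f (Fin.last k) = Fin.last p := (Finset.mem_filter.mp hf).2.2
      by_cases hr : r = Fin.last k
      · subst hr; simp [heq]
      · simp only [dif_neg hr, Fin.castSucc_castLT, Fin.castSucc_castPred]
    case riB =>
      intro g hg; funext r
      have hne : r.castSucc ≠ Fin.last k := Fin.ne_of_lt (Fin.castSucc_lt_last r)
      apply Fin.ext
      simp [dif_neg hne]
    case valB =>
      intro f hf
      have heq : f (Fin.last k) = Fin.last p := (Finset.mem_filter.mp hf).2.2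
      rw [Fin.prod_univ_castSucc, mul_comm]
      congr 1
      · rw [heq]; simp [Fin.val_last]

lemma gfp_succ (y : R) (a : ℤ → R) (n : ℕ) :
    gfp y a (n+1) = gfp y a n * (y - a ((n:ℤ)+1)) := Finset.prod_range_succ _ _

lemma genN : ∀ (p : ℕ) (x : Fin p → R) (a : ℤ → R) (y : R),
    ∑ k ∈ Finset.range (p+1), (-1:R)^k * feN p k x a * gfp y a (p - k)
      = ∏ i : Fin p, (y - x i) := by
  intro p
  induction p with
  | zero =>
      intro x a y
      simp [feN_zero, gfp]
  | succ p ih =>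
      intro x a y
      rw [Fin.prod_univ_castSucc]
      have ih' := ih (x ∘ Fin.castSucc) a y
      simp only [Function.comp_apply] at ih'
      rw [← ih']
      rw [Finset.sum_range_succ' _ (p+1)]
      have e1 : ∑ k ∈ Finset.range (p+1),
          (-1:R)^(k+1) * feN (p+1) (k+1) x a * gfp y a (p+1-(k+1))
          = -(∑ k ∈ Finset.range (p+1),
                (-1:R)^k * feN p (k+1) (x ∘ Fin.castSucc) a * gfp y a (p-k))
            - ∑ k ∈ Finset.range (p+1),
                (-1:R)^k * ((x (Fin.last p) - a ((p:ℤ)-(k:ℤ)+1))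
                  * feN p k (x ∘ Fin.castSucc) a) * gfp y a (p-k) := by
        rw [← Finset.sum_neg_distrib, ← Finset.sum_sub_distrib]
        apply Finset.sum_congr rfl
        intro k hk
        rw [feN_succ, Nat.succ_sub_succ]
        ring
      have e2 : (∑ k ∈ Finset.range (p+1),
            (-1:R)^k * feN p k (x ∘ Fin.castSucc) a * gfp y a (p-k)) * (y - x (Fin.last p))
          = ∑ k ∈ Finset.range (p+1),
              (-1:R)^k * feN p k (x ∘ Fin.castSucc) a * gfp y a ((p-k)+1)
            - ∑ k ∈ Finset.range (p+1),
                (-1:R)^k * ((x (Fin.last p) - a ((p:ℤ)-(k:ℤ)+1))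
                  * feN p k (x ∘ Fin.castSucc) a) * gfp y a (p-k) := by
        rw [Finset.sum_mul, ← Finset.sum_sub_distrib]
        apply Finset.sum_congr rfl
        intro k hk
        have hk' : k ≤ p := by
          have := Finset.mem_range.mp hk; omega
        have hcast : ((p-k:ℕ):ℤ) + 1 = (p:ℤ)-(k:ℤ)+1 := by
          push_cast [hk']; ring
        rw [gfp_succ, hcast]
        ring
      have e3 : ∑ k ∈ Finset.range (p+1),
            (-1:R)^k * feN p k (x ∘ Fin.castSucc) a * gfp y a ((p-k)+1)
          = gfp y a (p+1)
            - ∑ k ∈ Finset.range (p+1),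
                (-1:R)^k * feN p (k+1) (x ∘ Fin.castSucc) a * gfp y a (p-k) := by
        rw [Finset.sum_range_succ' _ p, Finset.sum_range_succ _ p]
        rw [feN_overflow p (p+1) (by omega), feN_zero]
        have : ∀ k ∈ Finset.range p,
            (-1:R)^(k+1) * feN p (k+1) (x ∘ Fin.castSucc) a * gfp y a ((p-(k+1))+1)
              = -((-1:R)^k * feN p (k+1) (x ∘ Fin.castSucc) a * gfp y a (p-k)) := by
          intro k hk
          have hk' : k < p := Finset.mem_range.mp hk
          have hidx : (p-(k+1))+1 = p-k := by omega
          rw [hidx, pow_succ]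
          ring
        rw [Finset.sum_congr rfl this, Finset.sum_neg_distrib]
        simp
        ring
      rw [e1, e2, e3]
      have hf0 : (-1:R)^0 * feN (p+1) 0 x a * gfp y a (p+1-0) = gfp y a (p+1) := by
        simp [feN_zero]
      rw [hf0]
      ring

/-- helper: `(-1)^a = (-1)^b` whenever `a ≡ b [MOD 2]`. -/
lemma neg_one_pow_congr_mod {a b : ℕ} (h : a % 2 = b % 2) : ((-1:R))^a = (-1)^b := by
  rcases Nat.even_or_odd a with ha | ha
  · have hb : Even b := by
      rw [Nat.even_iff] at ha ⊢; omega
    rw [ha.neg_one_pow, hb.neg_one_pow]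
  · have hb : Odd b := by
      rw [Nat.odd_iff] at ha ⊢; omega
    rw [ha.neg_one_pow, hb.neg_one_pow]

def Gmat (p q : ℕ) (x : Fin p → R) (a : ℤ → R) : Matrix (Fin (p+q)) (Fin p) R :=
  Matrix.of fun d j => gfp (x j) a (d : ℕ)

def Vmat (p q : ℕ) (x : Fin p → R) (a : ℤ → R) : Matrix (Fin (p+q)) (Fin q) R :=
  Matrix.of fun d l =>
    (-1:R)^((d:ℕ) + (l:ℕ) + p) * fe p x (shiftSeq a ((l:ℕ):ℤ)) (((l:ℕ):ℤ) + (p:ℤ) - ((d:ℕ):ℤ))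

def Cmat (p q : ℕ) (x : Fin p → R) (a : ℤ → R) : Matrix (Fin (p+q)) (Fin p ⊕ Fin q) R :=
  Matrix.fromCols (Gmat p q x a) (Vmat p q x a)

lemma orth (p q : ℕ) (x : Fin p → R) (a : ℤ → R) (j : Fin p) (l : Fin q) :
    ∑ d : Fin (p+q), Gmat p q x a d j * Vmat p q x a d l = 0 := by
  have hl : (l:ℕ) < q := l.isLt
  -- abbreviate the summand as a function of the ℕ index
  set f : ℕ → R := fun n =>
    gfp (x j) a n *
      ((-1:R)^(n + (l:ℕ) + p) * fe p x (shiftSeq a ((l:ℕ):ℤ)) (((l:ℕ):ℤ) + (p:ℤ) - (n:ℤ)))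
    with hf
  have step0 : ∑ d : Fin (p+q), Gmat p q x a d j * Vmat p q x a d l
      = ∑ n ∈ Finset.range (p+q), f n := by
    rw [← Fin.sum_univ_eq_sum_range (fun n => f n) (p+q)]
    rfl
  rw [step0]
  have step1 : ∑ n ∈ Finset.range (p+q), f n = ∑ n ∈ Finset.Icc (l:ℕ) ((l:ℕ)+p), f n := by
    symm
    apply Finset.sum_subset
    · intro n hn
      rw [Finset.mem_Icc] at hn
      rw [Finset.mem_range]
      omega
    · intro n hn hn'
      rw [Finset.mem_range] at hn
      rw [Finset.mem_Icc] at hn'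
      rw [hf]
      rcases lt_or_ge n (l:ℕ) with h | h
      · -- k = l + p - n > p : fe vanishes
        have : ((p:ℤ)) < ((l:ℕ):ℤ) + (p:ℤ) - (n:ℤ) := by
          push_cast; omega
        simp [fe_overflow p x _ this]
      · have h2 : (l:ℕ) + p < n := by omega
        have : ((l:ℕ):ℤ) + (p:ℤ) - (n:ℤ) < 0 := by push_cast; omega
        simp [fe_of_neg p x _ this]
  rw [step1]
  have step2 : ∑ n ∈ Finset.Icc (l:ℕ) ((l:ℕ)+p), f n
      = ∑ k ∈ Finset.range (p+1), f ((l:ℕ) + p - k) := by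
    apply Finset.sum_nbij' (i := fun n => (l:ℕ) + p - n) (j := fun k => (l:ℕ) + p - k)
    · intro n hn; rw [Finset.mem_Icc] at hn; rw [Finset.mem_range]; omega
    · intro k hk; rw [Finset.mem_range] at hk; rw [Finset.mem_Icc]; omega
    · intro n hn; rw [Finset.mem_Icc] at hn; omega
    · intro k hk; rw [Finset.mem_range] at hk; omega
    · intro n hn
      rw [Finset.mem_Icc] at hn
      congr 1
      omega
  rw [step2]
  have step3 : ∀ k ∈ Finset.range (p+1),
      f ((l:ℕ) + p - k)
        = gfp (x j) a (l:ℕ) *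
            ((-1:R)^k * feN p k x (shiftSeq a ((l:ℕ):ℤ))
              * gfp (x j) (shiftSeq a ((l:ℕ):ℤ)) (p-k)) := by
    intro k hk
    rw [Finset.mem_range] at hk
    have hk' : k ≤ p := by omega
    rw [hf]
    beta_reduce
    have harg : ((l:ℕ):ℤ) + (p:ℤ) - (((l:ℕ) + p - k : ℕ):ℤ) = (k:ℤ) := by
      push_cast [show k ≤ (l:ℕ)+p by omega]
      ring
    rw [harg, fe_natCast]
    have hsign : ((-1:R))^((l:ℕ) + p - k + (l:ℕ) + p) = (-1:R)^k := by
      apply neg_one_pow_congr_mod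
      omega
    rw [hsign]
    have hgfp : gfp (x j) a ((l:ℕ) + p - k)
        = gfp (x j) a (l:ℕ) * gfp (x j) (shiftSeq a ((l:ℕ):ℤ)) (p-k) := by
      rw [← gfp_add]
      congr 1
      omega
    rw [hgfp]
    ring
  rw [Finset.sum_congr rfl step3, ← Finset.mul_sum, genN p x (shiftSeq a ((l:ℕ):ℤ)) (x j)]
  rw [Finset.prod_eq_zero (Finset.mem_univ j) (sub_self (x j))]
  ring

/-! ### combinatorial helpers -/

lemma card_val_lt (p c : ℕ) (hc : c ≤ p) :
    (Finset.univ.filter fun r : Fin p => (r:ℕ) < c).card = c := by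
  rw [Finset.card_filter,
    Fin.sum_univ_eq_sum_range (fun n => if n < c then 1 else 0) p,
    ← Finset.card_filter]
  have : (Finset.range p).filter (fun n => n < c) = Finset.range c := by
    ext n
    simp only [Finset.mem_filter, Finset.mem_range]
    omega
  rw [this, Finset.card_range]

lemma card_val_le (p : ℕ) (i : Fin p) :
    (Finset.univ.filter fun r : Fin p => (r:ℕ) ≤ (i:ℕ)).card = (i:ℕ) + 1 := by
  have h : (Finset.univ.filter fun r : Fin p => (r:ℕ) ≤ (i:ℕ))
      = (Finset.univ.filter fun r : Fin p => (r:ℕ) < (i:ℕ)+1) := by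
    apply Finset.filter_congr
    intro r _
    omega
  rw [h, card_val_lt p ((i:ℕ)+1) (by omega)]

def conjF (p : ℕ) (lam : Fin p → ℕ) (t : ℕ) : ℕ :=
  (Finset.univ.filter fun r : Fin p => t + 1 ≤ lam r).card

lemma conjF_le (p : ℕ) (lam : Fin p → ℕ) (t : ℕ) : conjF p lam t ≤ p := by
  have := Finset.card_filter_le (Finset.univ : Finset (Fin p))
    (fun r : Fin p => t + 1 ≤ lam r)
  simpa [conjF] using this

lemma conjF_anti (p : ℕ) (lam : Fin p → ℕ) {t t' : ℕ} (h : t ≤ t') :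
    conjF p lam t' ≤ conjF p lam t := by
  apply Finset.card_le_card
  intro r hr
  simp only [Finset.mem_filter, Finset.mem_univ, true_and] at *
  omega

lemma conjF_gt_iff (p : ℕ) (lam : Fin p → ℕ) (hlam : Antitone lam) (t : ℕ) (i : Fin p) :
    (i:ℕ) < conjF p lam t ↔ t < lam i := by
  constructor
  · intro h
    by_contra hc
    push_neg at hc
    have hsub : (Finset.univ.filter fun r : Fin p => t + 1 ≤ lam r)
        ⊆ (Finset.univ.filter fun r : Fin p => (r:ℕ) < (i:ℕ)) := by
      intro r hr
      simp only [Finset.mem_filter, Finset.mem_univ, true_and] at *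
      by_contra hri
      push_neg at hri
      have : lam r ≤ lam i := hlam (by exact_mod_cast hri)
      omega
    have := Finset.card_le_card hsub
    rw [card_val_lt p (i:ℕ) (by omega)] at this
    rw [conjF] at h
    omega
  · intro h
    have hsub : (Finset.univ.filter fun r : Fin p => (r:ℕ) ≤ (i:ℕ))
        ⊆ (Finset.univ.filter fun r : Fin p => t + 1 ≤ lam r) := by
      intro r hr
      simp only [Finset.mem_filter, Finset.mem_univ, true_and] at *
      have : lam i ≤ lam r := hlam (by exact_mod_cast hr)
      omega
    have := Finset.card_le_card hsub
    rw [card_val_le p i] at this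
    rw [conjF]
    omega

lemma sum_conjF (p q : ℕ) (lam : Fin p → ℕ) (hrect : ∀ i, lam i ≤ q) :
    ∑ t : Fin q, conjF p lam (t:ℕ) = ∑ i, lam i := by
  have h1 : ∀ t : Fin q, conjF p lam (t:ℕ)
      = ∑ r : Fin p, if (t:ℕ) + 1 ≤ lam r then 1 else 0 := by
    intro t
    rw [conjF, Finset.card_filter]
  rw [Finset.sum_congr rfl (fun t _ => h1 t), Finset.sum_comm]
  apply Finset.sum_congr rfl
  intro r _
  rw [← Finset.card_filter]
  exact card_val_lt q (lam r) (hrect r)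

def muN (p : ℕ) (lam : Fin p → ℕ) (i : Fin p) : ℕ := lam i + (p - 1 - (i:ℕ))

def nuN (p : ℕ) (lam : Fin p → ℕ) (t : ℕ) : ℕ := p + t - conjF p lam t

lemma exists_e (p q : ℕ) (lam : Fin p → ℕ) (hlam : Antitone lam)
    (hrect : ∀ i, lam i ≤ q) :
    ∃ e : Fin p ⊕ Fin q ≃ Fin (p+q),
      (∀ i, (e (Sum.inl i) : ℕ) = muN p lam i) ∧
      (∀ t, (e (Sum.inr t) : ℕ) = nuN p lam (t:ℕ)) := by
  have hmu : ∀ i : Fin p, muN p lam i < p + q := by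
    intro i
    have := hrect i
    have := i.isLt
    rw [muN]; omega
  have hnu : ∀ t : Fin q, nuN p lam (t:ℕ) < p + q := by
    intro t
    have := t.isLt
    rw [nuN]; omega
  set F : Fin p ⊕ Fin q → Fin (p+q) :=
    Sum.elim (fun i => ⟨muN p lam i, hmu i⟩) (fun t => ⟨nuN p lam (t:ℕ), hnu t⟩) with hF
  have hinj : Function.Injective F := by
    intro c c' h
    have hval : (F c : ℕ) = (F c' : ℕ) := by rw [h]
    match c, c' with
    | Sum.inl i, Sum.inl i' =>
        simp only [hF, Sum.elim_inl] at hval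
        rw [muN, muN] at hval
        congr 1
        apply Fin.ext
        rcases lt_trichotomy (i:ℕ) (i':ℕ) with hlt | heq | hgt
        · exfalso
          have h1 : lam i' ≤ lam i := hlam (by exact_mod_cast hlt.le)
          have h2 := i'.isLt
          omega
        · exact heq
        · exfalso
          have h1 : lam i ≤ lam i' := hlam (by exact_mod_cast hgt.le)
          have h2 := i.isLt
          omega
    | Sum.inr t, Sum.inr t' =>
        simp only [hF, Sum.elim_inr] at hval
        rw [nuN, nuN] at hval
        congr 1
        apply Fin.ext
        rcases lt_trichotomy (t:ℕ) (t':ℕ) with hlt | heq | hgt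
        · exfalso
          have h1 : conjF p lam (t':ℕ) ≤ conjF p lam (t:ℕ) := conjF_anti p lam hlt.le
          have h2 := conjF_le p lam (t:ℕ)
          omega
        · exact heq
        · exfalso
          have h1 : conjF p lam (t:ℕ) ≤ conjF p lam (t':ℕ) := conjF_anti p lam hgt.le
          have h2 := conjF_le p lam (t':ℕ)
          omega
    | Sum.inl i, Sum.inr t =>
        exfalso
        simp only [hF, Sum.elim_inl, Sum.elim_inr] at hval
        rw [muN, nuN] at hval
        have hip := i.isLt
        have hcp := conjF_le p lam (t:ℕ)
        by_cases hti : (t:ℕ) < lam i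
        · have := (conjF_gt_iff p lam hlam (t:ℕ) i).mpr hti
          omega
        · push_neg at hti
          have := (conjF_gt_iff p lam hlam (t:ℕ) i).not.mpr (by omega)
          push_neg at this
          omega
    | Sum.inr t, Sum.inl i =>
        exfalso
        simp only [hF, Sum.elim_inl, Sum.elim_inr] at hval
        rw [muN, nuN] at hval
        have hip := i.isLt
        have hcp := conjF_le p lam (t:ℕ)
        by_cases hti : (t:ℕ) < lam i
        · have := (conjF_gt_iff p lam hlam (t:ℕ) i).mpr hti
          omega
        · push_neg at hti
          have := (conjF_gt_iff p lam hlam (t:ℕ) i).not.mpr (by omega)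
          push_neg at this
          omega
  have hbij : Function.Bijective F := by
    rw [Fintype.bijective_iff_injective_and_card]
    exact ⟨hinj, by simp⟩
  refine ⟨Equiv.ofBijective F hbij, fun i => ?_, fun t => ?_⟩
  · rfl
  · rfl

lemma symm_swap_apply {α β : Type*} [DecidableEq α] [DecidableEq β]
    (f : α ≃ β) (u v z : β) :
    f.symm (Equiv.swap u v z) = Equiv.swap (f.symm u) (f.symm v) (f.symm z) := by
  by_cases hz : z = u
  · subst hz; simp
  by_cases hz' : z = v
  · subst hz'; simp
  · rw [Equiv.swap_apply_of_ne_of_ne hz hz', Equiv.swap_apply_of_ne_of_ne]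
    · intro h; exact hz (f.symm.injective h)
    · intro h; exact hz' (f.symm.injective h)

lemma sign_e (p q : ℕ) : ∀ (n : ℕ) (lam : Fin p → ℕ), (∑ i, lam i = n) →
    Antitone lam → (∀ i, lam i ≤ q) →
    ∀ (e e0 : Fin p ⊕ Fin q ≃ Fin (p+q)),
    (∀ i, (e (Sum.inl i) : ℕ) = muN p lam i) →
    (∀ t, (e (Sum.inr t) : ℕ) = nuN p lam (t:ℕ)) →
    (∀ i, (e0 (Sum.inl i) : ℕ) = p - 1 - (i:ℕ)) →
    (∀ t, (e0 (Sum.inr t) : ℕ) = p + (t:ℕ)) →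
    Equiv.Perm.sign (e.trans e0.symm) = (-1)^n := by
  intro n
  induction n with
  | zero =>
    intro lam hsum hlam hrect e e0 he1 he2 h01 h02
    have hz : ∀ i, lam i = 0 := by
      intro i
      exact (Finset.sum_eq_zero_iff.mp hsum) i (Finset.mem_univ i)
    have hee : e = e0 := by
      apply Equiv.ext
      intro c
      apply Fin.ext
      match c with
      | Sum.inl i => rw [he1, h01, muN, hz i, zero_add]
      | Sum.inr t =>
        rw [he2, h02, nuN]
        have hc : conjF p lam (t:ℕ) = 0 := by
          rw [conjF, Finset.card_eq_zero, Finset.filter_eq_empty_iff]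
          intro r _
          rw [hz r]
          omega
        omega
    rw [hee, Equiv.self_trans_symm]
    simp
  | succ n ih =>
    intro lam hsum hlam hrect e e0 he1 he2 h01 h02
    have valne : ∀ {a b : Fin (p+q)}, a ≠ b → (a:ℕ) ≠ (b:ℕ) :=
      fun h h' => h (Fin.ext h')
    -- the largest index carrying a nonzero part
    have hne : (Finset.univ.filter fun i : Fin p => lam i ≠ 0).Nonempty := by
      by_contra h
      rw [Finset.not_nonempty_iff_eq_empty, Finset.filter_eq_empty_iff] at h
      have : ∀ i, lam i = 0 := by
        intro i
        have := h (Finset.mem_univ i)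
        simpa using this
      rw [Finset.sum_congr rfl (fun i _ => this i)] at hsum
      simp at hsum
    set i₀ := (Finset.univ.filter fun i : Fin p => lam i ≠ 0).max' hne with hi₀def
    have hi₀mem := (Finset.univ.filter fun i : Fin p => lam i ≠ 0).max'_mem hne
    have hi₀ne : lam i₀ ≠ 0 := (Finset.mem_filter.mp hi₀mem).2
    have hi₀max : ∀ j : Fin p, i₀ < j → lam j = 0 := by
      intro j hj
      by_contra hq
      have hjmem : j ∈ (Finset.univ.filter fun i : Fin p => lam i ≠ 0) :=
        Finset.mem_filter.mpr ⟨Finset.mem_univ j, hq⟩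
      have := Finset.le_max' _ j hjmem
      exact absurd hj (not_lt.mpr this)
    obtain ⟨lam', hl'i₀, hl'ne⟩ :
        ∃ f : Fin p → ℕ, f i₀ = lam i₀ - 1 ∧ ∀ i, i ≠ i₀ → f i = lam i :=
      ⟨Function.update lam i₀ (lam i₀ - 1), Function.update_self _ _ _,
        fun i hi => Function.update_of_ne hi _ _⟩
    have hsum' : ∑ i, lam' i = n := by
      have hpt : ∀ i ∈ Finset.univ, lam i = (if i = i₀ then 1 else 0) + lam' i := by
        intro i _
        rcases eq_or_ne i i₀ with hii | hii
        · rw [hii, hl'i₀, if_pos rfl]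
          omega
        · rw [hl'ne i hii, if_neg hii, zero_add]
      rw [Finset.sum_congr rfl hpt, Finset.sum_add_distrib] at hsum
      have hione : ∑ i : Fin p, (if i = i₀ then 1 else 0) = 1 := by
        simp
      rw [hione] at hsum
      omega
    have hlam'anti : Antitone lam' := by
      intro j j' h
      have hmono := hlam h
      rcases eq_or_ne j' i₀ with h1 | h1
      · rcases eq_or_ne j i₀ with h2 | h2
        · rw [h1, h2]
        · rw [h1, hl'i₀, hl'ne j h2]
          rw [h1] at hmono
          omega
      · rcases eq_or_ne j i₀ with h2 | h2
        · rw [hl'ne j' h1, h2, hl'i₀]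
          have hlt : i₀ < j' := lt_of_le_of_ne (h2 ▸ h) (fun hh => h1 hh.symm)
          have := hi₀max j' hlt
          omega
        · rw [hl'ne _ h1, hl'ne _ h2]
          exact hmono
    have hrect' : ∀ i, lam' i ≤ q := by
      intro i
      rcases eq_or_ne i i₀ with hii | hii
      · rw [hii, hl'i₀]
        have := hrect i₀
        omega
      · rw [hl'ne _ hii]
        exact hrect i
    obtain ⟨e', he'1, he'2⟩ := exists_e p q lam' hlam'anti hrect'
    -- conjugate partition of lam′
    have hconj' : ∀ t : ℕ, conjF p lam' t
        = if t + 1 = lam i₀ then conjF p lam t - 1 else conjF p lam t := by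
      intro t
      by_cases ht : t + 1 = lam i₀
      · rw [if_pos ht, conjF, conjF]
        have hset : (Finset.univ.filter fun r => t+1 ≤ lam' r)
            = (Finset.univ.filter fun r : Fin p => t+1 ≤ lam r).erase i₀ := by
          ext r
          simp only [Finset.mem_filter, Finset.mem_erase, Finset.mem_univ, true_and]
          rcases eq_or_ne r i₀ with rfl | hr
          · rw [hl'i₀]
            constructor
            · intro hcon; omega
            · intro hcon; exact absurd rfl hcon.1
          · rw [hl'ne r hr]
            constructor
            · intro hcon; exact ⟨hr, hcon⟩
            · intro hcon; exact hcon.2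
        rw [hset, Finset.card_erase_of_mem]
        exact Finset.mem_filter.mpr ⟨Finset.mem_univ _, by omega⟩
      · rw [if_neg ht, conjF, conjF]
        congr 1
        apply Finset.filter_congr
        intro r _
        rcases eq_or_ne r i₀ with rfl | hr
        · rw [hl'i₀]
          omega
        · rw [hl'ne r hr]
    have hconj0 : conjF p lam (lam i₀ - 1) = (i₀:ℕ) + 1 := by
      rw [conjF]
      have hfil : (Finset.univ.filter fun r : Fin p => (lam i₀ - 1) + 1 ≤ lam r)
          = Finset.univ.filter fun r : Fin p => (r:ℕ) ≤ (i₀:ℕ) := by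
        apply Finset.filter_congr
        intro r _
        constructor
        · intro hr
          by_contra hri
          push_neg at hri
          have : lam r = 0 := hi₀max r (by exact_mod_cast hri)
          omega
        · intro hr
          have : lam i₀ ≤ lam r := hlam (by exact_mod_cast hr)
          omega
      rw [hfil]
      exact card_val_le p i₀
    -- the swap
    set u := e' (Sum.inl i₀) with hudef
    set v := e (Sum.inl i₀) with hvdef
    have hvval : (v:ℕ) = muN p lam i₀ := he1 i₀
    have huval : (u:ℕ) = muN p lam i₀ - 1 := by
      rw [hudef, he'1]
      simp only [muN, hl'i₀]
      have := i₀.isLt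
      omega
    have hmupos : 1 ≤ muN p lam i₀ := by
      rw [muN]; omega
    have huv : u ≠ v := by
      intro h
      have := congrArg Fin.val h
      omega
    have hswap : ∀ c, e' c = Equiv.swap u v (e c) := by
      intro c
      match c with
      | Sum.inl i =>
        rcases eq_or_ne i i₀ with rfl | hi
        · rw [← hvdef, Equiv.swap_apply_right, hudef]
        · have h1 : e (Sum.inl i) ≠ v := by
            rw [hvdef]
            exact e.injective.ne (by simp [hi])
          have h2 : e (Sum.inl i) ≠ u := by
            intro h
            have hval := congrArg Fin.val h
            rw [he1 i, huval] at hval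
            have hne' : (e' (Sum.inl i) : ℕ) ≠ (e' (Sum.inl i₀) : ℕ) :=
              valne (e'.injective.ne (by simp [hi]))
            rw [he'1 i, he'1 i₀] at hne'
            have hmueq : muN p lam' i = muN p lam i := by
              simp only [muN, hl'ne i hi]
            have hmu'eq : muN p lam' i₀ = muN p lam i₀ - 1 := by
              simp only [muN, hl'i₀]
              have := i₀.isLt
              omega
            rw [hmueq, hmu'eq] at hne'
            omega
          rw [Equiv.swap_apply_of_ne_of_ne h2 h1]
          apply Fin.ext
          rw [he'1, he1]
          simp only [muN, hl'ne i hi]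
      | Sum.inr t =>
        rcases eq_or_ne (t:ℕ) (lam i₀ - 1) with ht | ht
        · -- the swapped position
          have het : e (Sum.inr t) = u := by
            apply Fin.ext
            rw [he2, huval, nuN, ht, hconj0, muN]
            have := i₀.isLt
            omega
          have hc't : conjF p lam' (lam i₀ - 1) = (i₀:ℕ) := by
            have hcc := hconj' (lam i₀ - 1)
            rw [if_pos (by omega), hconj0] at hcc
            omega
          have he't : e' (Sum.inr t) = v := by
            apply Fin.ext
            rw [he'2, hvval, nuN, ht, hc't, muN]
            have := i₀.isLt
            omega
          rw [het, Equiv.swap_apply_left, he't]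
        · -- untouched position
          have heq : e' (Sum.inr t) = e (Sum.inr t) := by
            apply Fin.ext
            have hcc := hconj' (t:ℕ)
            rw [if_neg (by omega)] at hcc
            rw [he'2, he2, nuN, nuN, hcc]
          have h1 : e (Sum.inr t) ≠ v := by
            rw [hvdef]
            exact e.injective.ne (by simp)
          have h2 : e (Sum.inr t) ≠ u := by
            rw [← heq, hudef]
            exact e'.injective.ne (by simp)
          rw [Equiv.swap_apply_of_ne_of_ne h2 h1, heq]
    -- relate the two permutations
    have hfact : e.trans e0.symm
        = Equiv.swap (e0.symm u) (e0.symm v) * (e'.trans e0.symm) := by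
      apply Equiv.ext
      intro c
      have : e' c = Equiv.swap u v (e c) := hswap c
      have h2 : Equiv.swap u v (e' c) = e c := by
        rw [this, Equiv.swap_apply_self]
      simp only [Equiv.Perm.mul_apply, Equiv.trans_apply]
      rw [← h2, symm_swap_apply]
    rw [hfact, map_mul]
    rw [Equiv.Perm.sign_swap (fun h => huv (e0.symm.injective h))]
    rw [ih lam' hsum' hlam'anti hrect' e' e0 he'1 he'2 h01 h02]
    rw [pow_succ]
    exact mul_comm _ _


lemma inst_lemma (p q : ℕ) (x : Fin p → R) (a : ℤ → R) (lam : Fin p → ℕ)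
    (e : Fin p ⊕ Fin q ≃ Fin (p+q))
    (he1 : ∀ i, (e (Sum.inl i) : ℕ) = muN p lam i) :
    Matrix.det (Matrix.of fun i j : Fin p => gfp (x j) a (muN p lam i)) *
      Matrix.det ((Vmat p q x a).transpose * Vmat p q x a) =
    Matrix.det ((Cmat p q x a).submatrix ⇑e id) *
      Matrix.det (Matrix.of fun t l : Fin q => Vmat p q x a (e (Sum.inr t)) l) := by
  classical
  set M := Matrix.of fun i j : Fin p => gfp (x j) a (muN p lam i) with hM
  obtain ⟨P, hP⟩ : ∃ P : Matrix (Fin (p+q)) (Fin p) R,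
      P = Matrix.of (fun d i => if e (Sum.inl i) = d then (1:R) else 0) := ⟨_, rfl⟩
  set F := Matrix.fromCols P (Vmat p q x a) with hF
  have hGP : (Gmat p q x a).transpose * P = M.transpose := by
    ext j i
    simp only [Matrix.mul_apply, Matrix.transpose_apply, hP, Matrix.of_apply, mul_ite,
      mul_one, mul_zero]
    rw [Finset.sum_ite_eq]
    simp only [Finset.mem_univ, if_true]
    rw [hM]
    simp only [Matrix.transpose_apply, Matrix.of_apply, Gmat]
    rw [he1 i]
  have hGV : (Gmat p q x a).transpose * Vmat p q x a = 0 := by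
    ext j l
    simp only [Matrix.mul_apply, Matrix.transpose_apply, Matrix.zero_apply]
    exact orth p q x a j l
  have hCF : (Cmat p q x a).transpose * F
      = Matrix.fromBlocks (M.transpose) 0
          ((Vmat p q x a).transpose * P) ((Vmat p q x a).transpose * Vmat p q x a) := by
    rw [Cmat, Matrix.transpose_fromCols, hF, Matrix.fromRows_mul_fromCols, hGP, hGV]
  have hdet1 : Matrix.det ((Cmat p q x a).transpose * F)
      = M.det * ((Vmat p q x a).transpose * Vmat p q x a).det := by
    rw [hCF, Matrix.det_fromBlocks_zero₁₂, Matrix.det_transpose]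
  have hsplit : (Cmat p q x a).transpose * F
      = ((Cmat p q x a).transpose).submatrix id ⇑e * F.submatrix ⇑e id := by
    rw [Matrix.submatrix_mul_equiv]
    rfl
  have hdet2 : Matrix.det ((Cmat p q x a).transpose * F)
      = Matrix.det ((Cmat p q x a).submatrix ⇑e id)
        * Matrix.det (F.submatrix ⇑e id) := by
    rw [hsplit, Matrix.det_mul]
    congr 1
    rw [← Matrix.det_transpose (((Cmat p q x a).transpose).submatrix id ⇑e),
      Matrix.transpose_submatrix, Matrix.transpose_transpose]
  have hFsub : F.submatrix ⇑e id
      = Matrix.fromBlocks 1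
          (Matrix.of fun (i' : Fin p) (l : Fin q) => Vmat p q x a (e (Sum.inl i')) l) 0
          (Matrix.of fun (t l : Fin q) => Vmat p q x a (e (Sum.inr t)) l) := by
    ext c c'
    match c, c' with
    | Sum.inl i', Sum.inl i =>
        simp only [Matrix.submatrix_apply, id_eq, hF, Matrix.fromCols_apply_inl,
          hP, Matrix.of_apply, Matrix.fromBlocks_apply₁₁, Matrix.one_apply]
        by_cases hii : i' = i
        · subst hii; simp
        · rw [if_neg (fun h => hii (Sum.inl.inj (e.injective h)).symm), if_neg hii]
    | Sum.inr t, Sum.inl i =>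
        simp only [Matrix.submatrix_apply, id_eq, hF, Matrix.fromCols_apply_inl,
          hP, Matrix.of_apply, Matrix.fromBlocks_apply₂₁, Matrix.zero_apply]
        rw [if_neg (fun h => by simpa using e.injective h)]
    | Sum.inl i', Sum.inr l =>
        simp only [Matrix.submatrix_apply, id_eq, hF, Matrix.fromCols_apply_inr,
          Matrix.fromBlocks_apply₁₂, Matrix.of_apply]
    | Sum.inr t, Sum.inr l =>
        simp only [Matrix.submatrix_apply, id_eq, hF, Matrix.fromCols_apply_inr,
          Matrix.fromBlocks_apply₂₂, Matrix.of_apply]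
  have hdet3 : (F.submatrix ⇑e id).det
      = (Matrix.of fun (t l : Fin q) => Vmat p q x a (e (Sum.inr t)) l).det := by
    rw [hFsub, Matrix.det_fromBlocks_zero₂₁, Matrix.det_one, one_mul]
  rw [← hdet1, hdet2, hdet3]

lemma main_aux (p q : ℕ) (x : Fin p → R) (a : ℤ → R) (lam : Fin p → ℕ)
    (hlam : Antitone lam) (hrect : ∀ i, lam i ≤ q) :
    Matrix.det (Matrix.of fun i j : Fin p => gfp (x j) a (lam i + (p - 1 - (i:ℕ)))) *
      Matrix.det ((Vmat p q x a).transpose * Vmat p q x a)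
    = Matrix.det (Matrix.of fun i j : Fin p => gfp (x j) a (p - 1 - (i:ℕ))) *
        Matrix.det (Matrix.of fun i j : Fin q =>
          fe p x (shiftSeq a ((j:ℕ):ℤ))
            (((conjF p lam (i:ℕ)):ℤ) - ((i:ℕ):ℤ) + ((j:ℕ):ℤ))) *
      Matrix.det ((Vmat p q x a).transpose * Vmat p q x a) := by
  classical
  obtain ⟨e, he1, he2⟩ := exists_e p q lam hlam hrect
  obtain ⟨e0, h01', h02'⟩ := exists_e p q (fun _ => 0) (fun _ _ _ => le_refl 0)
    (fun _ => Nat.zero_le q)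
  have h01 : ∀ i, (e0 (Sum.inl i) : ℕ) = p - 1 - (i:ℕ) := by
    intro i; rw [h01', muN, zero_add]
  have hconjz : ∀ t : ℕ, conjF p (fun _ => 0) t = 0 := by
    intro t
    rw [conjF, Finset.card_eq_zero, Finset.filter_eq_empty_iff]
    intro r _
    omega
  have h02 : ∀ t : Fin q, (e0 (Sum.inr t) : ℕ) = p + (t:ℕ) := by
    intro t; rw [h02', nuN, hconjz]; omega
  set Emat := Matrix.of fun i j : Fin q =>
    fe p x (shiftSeq a ((j:ℕ):ℤ))
      (((conjF p lam (i:ℕ)):ℤ) - ((i:ℕ):ℤ) + ((j:ℕ):ℤ)) with hEmat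
  have A := inst_lemma p q x a lam e he1
  have B := inst_lemma p q x a (fun _ => 0) e0 h01'
  -- the reference (λ = 0) V-block is unitriangular
  have hV0 : Matrix.det (Matrix.of fun t l : Fin q => Vmat p q x a (e0 (Sum.inr t)) l)
      = 1 := by
    have htri : (Matrix.of fun t l : Fin q => Vmat p q x a (e0 (Sum.inr t)) l).BlockTriangular
        (id : Fin q → Fin q) := by
      intro t l hlt
      simp only [Matrix.of_apply, Vmat, id_eq] at *
      have hneg : ((l:ℕ):ℤ) + (p:ℤ) - ((e0 (Sum.inr t) : ℕ):ℤ) < 0 := by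
        rw [h02 t]
        have : (l:ℕ) < (t:ℕ) := hlt
        push_cast
        omega
      rw [fe_of_neg p x _ hneg, mul_zero]
    rw [Matrix.det_of_upperTriangular htri]
    apply Finset.prod_eq_one
    intro t _
    simp only [Matrix.of_apply, Vmat]
    have harg : ((t:ℕ):ℤ) + (p:ℤ) - ((e0 (Sum.inr t) : ℕ):ℤ) = 0 := by
      rw [h02 t]; push_cast; ring
    rw [harg, fe_zero', h02 t]
    rw [show p + (t:ℕ) + (t:ℕ) + p = 2*(p + (t:ℕ)) by ring]
    rw [pow_mul]
    simp
  -- the V-block for λ, versus the conjugate matrix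
  have hparGen : ∀ S1 S2 SC SL : ℕ, S1 + SC = 2*(p*q) + S2 → SC = SL →
      (S1 + S2) % 2 = SL % 2 := by
    intro S1 S2 SC SL h1 h2
    omega
  have hkey : ∀ t : Fin q, nuN p lam (t:ℕ) + p + conjF p lam (t:ℕ) = 2*p + (t:ℕ) := by
    intro t
    have h1 := conjF_le p lam (t:ℕ)
    rw [nuN]
    omega
  have hsum1 : (∑ t : Fin q, (nuN p lam (t:ℕ) + p)) + (∑ t : Fin q, conjF p lam (t:ℕ))
      = ∑ t : Fin q, (2*p + (t:ℕ)) := by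
    rw [← Finset.sum_add_distrib]
    exact Finset.sum_congr rfl (fun t _ => hkey t)
  have hsum2 : ∑ t : Fin q, (2*p + (t:ℕ)) = 2*(p*q) + ∑ t : Fin q, (t:ℕ) := by
    rw [Finset.sum_add_distrib, Finset.sum_const, Finset.card_univ, Fintype.card_fin,
      smul_eq_mul]
    ring_nf
  have hpar : ((∑ t : Fin q, (nuN p lam (t:ℕ) + p)) + ∑ l : Fin q, (l:ℕ)) % 2
      = (∑ i, lam i) % 2 :=
    hparGen _ _ _ _ (hsum1.trans hsum2) (sum_conjF p q lam hrect)
  have hVlam : Matrix.det (Matrix.of fun t l : Fin q => Vmat p q x a (e (Sum.inr t)) l)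
      = (-1:R)^(∑ i, lam i) * Matrix.det Emat := by
    have hent : ∀ t l : Fin q, Vmat p q x a (e (Sum.inr t)) l
        = ((-1:R)^(nuN p lam (t:ℕ) + p)) * (((-1:R)^(l:ℕ)) * Emat t l) := by
      intro t l
      simp only [Vmat, Matrix.of_apply, hEmat]
      rw [he2 t]
      have harg : ((l:ℕ):ℤ) + (p:ℤ) - ((nuN p lam (t:ℕ) : ℕ):ℤ)
          = ((conjF p lam (t:ℕ)):ℤ) - ((t:ℕ):ℤ) + ((l:ℕ):ℤ) := by
        have h1 := conjF_le p lam (t:ℕ)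
        rw [nuN, Nat.cast_sub (by omega)]
        push_cast
        ring
      rw [harg]
      rw [show nuN p lam (t:ℕ) + (l:ℕ) + p = (nuN p lam (t:ℕ) + p) + (l:ℕ) by ring]
      rw [pow_add]
      ring
    have hd1 := Matrix.det_mul_column (fun t : Fin q => (-1:R)^(nuN p lam (t:ℕ) + p))
      (Matrix.of fun t l : Fin q => (-1:R)^(l:ℕ) * Emat t l)
    have hd2 := Matrix.det_mul_row (fun l : Fin q => (-1:R)^(l:ℕ)) Emat
    calc Matrix.det (Matrix.of fun t l : Fin q => Vmat p q x a (e (Sum.inr t)) l)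
        = Matrix.det (Matrix.of fun t l : Fin q =>
            (-1:R)^(nuN p lam (t:ℕ) + p) *
              (Matrix.of fun t l : Fin q => (-1:R)^(l:ℕ) * Emat t l) t l) := by
          apply congrArg
          ext t l
          simp only [Matrix.of_apply]
          exact hent t l
      _ = (∏ t : Fin q, (-1:R)^(nuN p lam (t:ℕ) + p)) *
            Matrix.det (Matrix.of fun t l : Fin q => (-1:R)^(l:ℕ) * Emat t l) := hd1
      _ = (∏ t : Fin q, (-1:R)^(nuN p lam (t:ℕ) + p)) *
            ((∏ l : Fin q, (-1:R)^(l:ℕ)) * Matrix.det Emat) := by rw [hd2]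
      _ = (-1:R)^(∑ i, lam i) * Matrix.det Emat := by
          rw [Finset.prod_pow_eq_pow_sum, Finset.prod_pow_eq_pow_sum, ← mul_assoc,
            ← pow_add, neg_one_pow_congr_mod hpar]
  -- permutation relating the two C-submatrices
  have hperm : (Cmat p q x a).submatrix ⇑e id
      = ((Cmat p q x a).submatrix ⇑e0 id).submatrix ⇑(e.trans e0.symm) id := by
    have hcomp : (⇑e0 ∘ ⇑(e.trans e0.symm)) = ⇑e := by
      funext c; simp
    rw [Matrix.submatrix_submatrix, hcomp]
    rfl
  have hsign := sign_e p q (∑ i, lam i) lam rfl hlam hrect e e0 he1 he2 h01 h02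
  have hdelta : Matrix.det ((Cmat p q x a).submatrix ⇑e id)
      = ((-1:R)^(∑ i, lam i)) * Matrix.det ((Cmat p q x a).submatrix ⇑e0 id) := by
    rw [hperm, Matrix.det_permute, hsign]
    congr 1
    rw [Units.val_pow_eq_pow_val]
    push_cast
    rfl
  -- put the pieces together
  rw [hV0, mul_one] at B
  have hpow : ((-1:R)^(∑ i, lam i)) * ((-1:R)^(∑ i, lam i)) = 1 := by
    rw [← pow_add, Even.neg_one_pow ⟨∑ i, lam i, rfl⟩]
  have hMA : (Matrix.of fun i j : Fin p => gfp (x j) a (lam i + (p - 1 - (i:ℕ))))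
      = (Matrix.of fun i j : Fin p => gfp (x j) a (muN p lam i)) := rfl
  have hMB : (Matrix.of fun i j : Fin p => gfp (x j) a (p - 1 - (i:ℕ)))
      = (Matrix.of fun i j : Fin p => gfp (x j) a (muN p (fun _ => 0) i)) := by
    ext i j
    simp [muN]
  rw [hMA, hMB]
  rw [A, hdelta, hVlam]
  linear_combination (Matrix.det ((Cmat p q x a).submatrix ⇑e0 id) * Matrix.det Emat) * hpow
    - Matrix.det Emat * B

/-! ### transfer to a generic polynomial ring and back -/

lemma map_gfp {S T : Type*} [CommRing S] [CommRing T] (f : S →+* T)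
    (y : S) (b : ℤ → S) (n : ℕ) :
    f (gfp y b n) = gfp (f y) (fun m => f (b m)) n := by
  rw [gfp, gfp, map_prod]
  apply Finset.prod_congr rfl
  intro i _
  rw [map_sub]

lemma map_fe {S T : Type*} [CommRing S] [CommRing T] (f : S →+* T)
    (p : ℕ) (x : Fin p → S) (b : ℤ → S) (k : ℤ) :
    f (fe p x b k) = fe p (fun i => f (x i)) (fun m => f (b m)) k := by
  rw [fe, fe]
  split_ifs with h
  · rw [map_sum]
    apply Finset.sum_congr rfl
    intro g _
    rw [map_prod]
    apply Finset.prod_congr rfl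
    intro r _
    rw [map_sub]
  · exact map_zero f

lemma fe_zero_fun (p : ℕ) (k : ℤ) :
    fe p (fun _ => (0:ℤ)) (fun _ => 0) k = if k = 0 then 1 else 0 := by
  rcases lt_trichotomy k 0 with h | h | h
  · rw [fe_of_neg _ _ _ h, if_neg (by omega)]
  · subst h
    rw [fe_zero', if_pos rfl]
  · rw [if_neg (by omega)]
    obtain ⟨n, rfl⟩ : ∃ n : ℕ, (n:ℤ) = k := ⟨k.toNat, Int.toNat_of_nonneg h.le⟩
    rw [fe_natCast]
    have hn : 0 < n := by exact_mod_cast h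
    rw [feN]
    apply Finset.sum_eq_zero
    intro g _
    apply Finset.prod_eq_zero (Finset.mem_univ (⟨0, hn⟩ : Fin n))
    simp

def xg (p : ℕ) : Fin p → MvPolynomial (Fin p ⊕ ℤ) ℤ := fun i => MvPolynomial.X (Sum.inl i)
def ag (p : ℕ) : ℤ → MvPolynomial (Fin p ⊕ ℤ) ℤ := fun n => MvPolynomial.X (Sum.inr n)

lemma Dv_ne (p q : ℕ) :
    Matrix.det ((Vmat p q (xg p) (ag p)).transpose * Vmat p q (xg p) (ag p)) ≠ 0 := by
  intro h0
  set ψ : MvPolynomial (Fin p ⊕ ℤ) ℤ →+* ℤ :=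
    (MvPolynomial.eval (fun _ : Fin p ⊕ ℤ => (0:ℤ))) with hψ
  have hcast := congrArg ψ h0
  rw [map_zero, RingHom.map_det] at hcast
  have hmapmul : ψ.mapMatrix ((Vmat p q (xg p) (ag p)).transpose * Vmat p q (xg p) (ag p))
      = ((Vmat p q (xg p) (ag p)).map ψ).transpose * ((Vmat p q (xg p) (ag p)).map ψ) := by
    rw [RingHom.mapMatrix_apply, Matrix.map_mul, Matrix.transpose_map]
  rw [hmapmul] at hcast
  have hVψ : (Vmat p q (xg p) (ag p)).map ψ
      = Matrix.of (fun (d : Fin (p+q)) (l : Fin q) =>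
          if (d:ℕ) = (l:ℕ) + p then (1:ℤ) else 0) := by
    ext d l
    simp only [Matrix.map_apply, Vmat, Matrix.of_apply]
    rw [map_mul, map_pow, map_neg, map_one, map_fe]
    have hx : (fun i => ψ (xg p i)) = fun _ => (0:ℤ) := by
      funext i; simp [hψ, xg]
    have ha : (fun m => ψ (shiftSeq (ag p) ((l:ℕ):ℤ) m)) = fun _ => (0:ℤ) := by
      funext m; simp [hψ, ag, shiftSeq]
    rw [hx, ha, fe_zero_fun]
    by_cases hdl : (d:ℕ) = (l:ℕ) + p
    · rw [if_pos (by push_cast; omega), if_pos hdl, mul_one]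
      rw [hdl, show (l:ℕ) + p + (l:ℕ) + p = 2*((l:ℕ)+p) by ring, pow_mul]
      simp
    · rw [if_neg (by push_cast; omega), if_neg hdl, mul_zero]
  rw [hVψ] at hcast
  have hid : (Matrix.of (fun (d : Fin (p+q)) (l : Fin q) =>
        if (d:ℕ) = (l:ℕ) + p then (1:ℤ) else 0)).transpose *
      (Matrix.of (fun (d : Fin (p+q)) (l : Fin q) =>
        if (d:ℕ) = (l:ℕ) + p then (1:ℤ) else 0))
      = (1 : Matrix (Fin q) (Fin q) ℤ) := by
    ext l l'
    simp only [Matrix.mul_apply, Matrix.transpose_apply, Matrix.of_apply, Matrix.one_apply]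
    have hl : (l:ℕ) + p < p + q := by have := l.isLt; omega
    rw [Finset.sum_eq_single (⟨(l:ℕ)+p, hl⟩ : Fin (p+q))]
    · by_cases hll : l = l'
      · subst hll
        simp
      · have h1 : ¬((l:ℕ) + p = (l':ℕ) + p) := fun hcon => hll (Fin.ext (by omega))
        simp [h1, hll]
        exact fun h => hll (Fin.ext h)
    · intro d _ hd
      rw [if_neg, zero_mul]
      intro hcon
      apply hd
      apply Fin.ext
      simp [hcon]
    · intro hmem
      exact absurd (Finset.mem_univ _) hmem
  rw [hid, Matrix.det_one] at hcast
  exact one_ne_zero hcast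

lemma generic_identity (p q : ℕ) (lam : Fin p → ℕ)
    (hlam : Antitone lam) (hrect : ∀ i, lam i ≤ q) :
    Matrix.det (Matrix.of fun i j : Fin p => gfp (xg p j) (ag p) (p - 1 - (i:ℕ))) *
      Matrix.det (Matrix.of fun i j : Fin q =>
        fe p (xg p) (shiftSeq (ag p) ((j:ℕ):ℤ))
          (((conjF p lam (i:ℕ)):ℤ) - ((i:ℕ):ℤ) + ((j:ℕ):ℤ)))
    = Matrix.det (Matrix.of fun i j : Fin p =>
        gfp (xg p j) (ag p) (lam i + (p - 1 - (i:ℕ)))) := by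
  have h := main_aux p q (xg p) (ag p) lam hlam hrect
  exact (mul_right_cancel₀ (Dv_ne p q) h).symm

/-- (Factorial Jacobi-Trudi, dual version.)  For `λ` contained in the
    `p × (m-p)` rectangle, the factorial Schur function `s_λ(x|a)` (given as the ratio
    `det[(x_j|a)^{λ_i+p-i}] / det[(x_j|a)^{p-i}]`, stated here with the denominator cleared)
    equals `det[ e_{λ'_i - i + j}(x|τ^{j-1}a) ]_{1≤i,j≤m-p}`, where `λ'` is the conjugate. -/
theorem factorial_jacobiTrudi_e (p m : ℕ) (hpm : p ≤ m) (x : Fin p → R) (a : ℤ → R)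
    (lam : Fin p → ℕ) (hlam : Antitone lam) (hrect : ∀ i, lam i ≤ m - p) :
    Matrix.det (Matrix.of fun i j : Fin p => gfp (x j) a (p - 1 - (i : ℕ))) *
        Matrix.det (Matrix.of fun i j : Fin (m - p) =>
          fe p x (shiftSeq a ((j : ℕ) : ℤ))
            (((Finset.univ.filter (fun r : Fin p => (i : ℕ) + 1 ≤ lam r)).card : ℤ)
              - ((i : ℕ) : ℤ) + ((j : ℕ) : ℤ))) =
      Matrix.det (Matrix.of fun i j : Fin p => gfp (x j) a (lam i + (p - 1 - (i : ℕ)))) := by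
  classical
  set φ : MvPolynomial (Fin p ⊕ ℤ) ℤ →+* R :=
    MvPolynomial.eval₂Hom (Int.castRingHom R) (Sum.elim x a) with hφ
  have hx : ∀ i, φ (xg p i) = x i := by
    intro i; simp [hφ, xg]
  have ha : ∀ n, φ (ag p n) = a n := by
    intro n; simp [hφ, ag]
  have hxfun : (fun i => φ (xg p i)) = x := funext hx
  have hgen := generic_identity p (m-p) lam hlam hrect
  have hmap := congrArg φ hgen
  rw [map_mul, RingHom.map_det, RingHom.map_det, RingHom.map_det] at hmap
  have hW : φ.mapMatrix (Matrix.of fun i j : Fin p => gfp (xg p j) (ag p) (p - 1 - (i:ℕ)))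
      = Matrix.of fun i j : Fin p => gfp (x j) a (p - 1 - (i:ℕ)) := by
    ext i j
    simp only [RingHom.mapMatrix_apply, Matrix.map_apply, Matrix.of_apply]
    rw [map_gfp, hx j]
    congr 1
    funext n
    exact ha _
  have hM : φ.mapMatrix (Matrix.of fun i j : Fin p =>
        gfp (xg p j) (ag p) (lam i + (p - 1 - (i:ℕ))))
      = Matrix.of fun i j : Fin p => gfp (x j) a (lam i + (p - 1 - (i:ℕ))) := by
    ext i j
    simp only [RingHom.mapMatrix_apply, Matrix.map_apply, Matrix.of_apply]
    rw [map_gfp, hx j]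
    congr 1
    funext n
    exact ha _
  have hE : φ.mapMatrix (Matrix.of fun i j : Fin (m-p) =>
        fe p (xg p) (shiftSeq (ag p) ((j:ℕ):ℤ))
          (((conjF p lam (i:ℕ)):ℤ) - ((i:ℕ):ℤ) + ((j:ℕ):ℤ)))
      = Matrix.of fun i j : Fin (m-p) =>
          fe p x (shiftSeq a ((j : ℕ) : ℤ))
            (((Finset.univ.filter (fun r : Fin p => (i : ℕ) + 1 ≤ lam r)).card : ℤ)
              - ((i : ℕ) : ℤ) + ((j : ℕ) : ℤ)) := by
    ext i j
    simp only [RingHom.mapMatrix_apply, Matrix.map_apply, Matrix.of_apply]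
    rw [map_fe, hxfun]
    have hshift : (fun n => φ (shiftSeq (ag p) ((j:ℕ):ℤ) n)) = shiftSeq a ((j:ℕ):ℤ) := by
      funext n
      simp only [shiftSeq]
      exact ha _
    rw [hshift]
    rfl
  rw [hW, hM, hE] at hmap
  exact hmap
end
end

section
/- With t the sequence t_i = T_{m−i+1} for 1 ≤ i ≤ m and 0 otherwise, the ring homomorphism Ψ : Λ[q][h_1,...,h_{m−p}] → A (where A = Λ[q][e_1(x|t),...,e_p(x|t)] / ⟨h_{m−p+1}(x|t),...,h_m(x|t)+(−1)^p q⟩) sending h_k ↦ h_k(x|t) satisfies Ψ(τ^{−s}h_j) = h_j(x|τ^{−s}t) in A for all s ≥ 0 and j < m, and Ψ(τ^{−(m−1)}h_m) = h_m(x|τ^{−(m−1)}t) + (−1)^p q in A. -/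
open Finset
open scoped Classical

set_option maxSynthPendingDepth 3
set_option synthInstance.maxHeartbeats 1000000
set_option maxHeartbeats 1000000

noncomputable section

variable {R : Type*} [CommRing R]

/-- the sequence `t` with `t_i = T_{m-i+1}` for `1 ≤ i ≤ m` and `t_i = 0` otherwise,
    with `T_1,...,T_m` indeterminates generating `Λ = ℤ[T_1,...,T_m]`. -/
def tseq (m : ℕ) : ℤ → MvPolynomial (Fin m) ℤ := fun i =>
  if h : 1 ≤ i ∧ i ≤ (m : ℤ) then MvPolynomial.X ⟨((m : ℤ) - i).toNat, by omega⟩ else 0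

/-- `Λ[q]`, with `q` an indeterminate over `Λ = ℤ[T_1,...,T_m]` -/
abbrev Lq (m : ℕ) := Polynomial (MvPolynomial (Fin m) ℤ)

/-- `Λ[q][x_1,...,x_p]` -/
abbrev Sx (p m : ℕ) := MvPolynomial (Fin p) (Lq m)

/-- the sequence `t` viewed inside `Λ[q][x_1,...,x_p]` -/
def tq (p m : ℕ) : ℤ → Sx p m := fun i => MvPolynomial.C (Polynomial.C (tseq m i))

/-- the `Λ[q]`-subalgebra `Λ[q][e_1(x|t),...,e_p(x|t)]` of `Λ[q][x_1,...,x_p]` -/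
def T0 (p m : ℕ) : Subalgebra (Lq m) (Sx p m) :=
  Algebra.adjoin (Lq m)
    (Set.range fun k : Fin p => fe p MvPolynomial.X (tq p m) (((k : ℕ) : ℤ) + 1))

/-- the ideal `⟨h_{m-p+1}(x|t), ..., h_{m-1}(x|t), h_m(x|t) + (-1)^p q⟩` of
    `Λ[q][e_1(x|t),...,e_p(x|t)]`  (the membership of the `h_k(x|t)` in this subalgebra
    is supplied as the argument `hh`). -/
def relIdeal (p m : ℕ)
    (hh : ∀ k : ℤ, fh p MvPolynomial.X (tq p m) k ∈ T0 p m) : Ideal (T0 p m) :=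
  Ideal.span
    ((Set.range fun k : Fin (p - 1) =>
        (⟨fh p MvPolynomial.X (tq p m) ((m : ℤ) - (p : ℤ) + 1 + (k : ℕ)),
          hh _⟩ : T0 p m)) ∪
      {(⟨fh p MvPolynomial.X (tq p m) (m : ℤ) +
            algebraMap (Lq m) (Sx p m) ((-1) ^ p * Polynomial.X),
          (T0 p m).add_mem (hh _) ((T0 p m).algebraMap_mem _)⟩ : T0 p m)})

/-- the abstract shifted indeterminates `τ^{-s}h_j` in `Λ[q][h_1,...,h_{m-p}]`:
    `τ^0 h_j = h_j` (with `h_0 = 1` and `h_j = 0` for `j < 0` or `j > m-p`), and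
    `τ^{-(s+1)}h_j = τ^{-s}h_j + (t_{j+p-(s+1)} - t_{1-(s+1)})·τ^{-s}h_{j-1}`. -/
def tauh (p m : ℕ) : ℕ → ℤ → MvPolynomial (Fin (m - p)) (Lq m)
  | 0, j =>
      if h : 1 ≤ j ∧ j ≤ ((m - p : ℕ) : ℤ) then MvPolynomial.X ⟨(j - 1).toNat, by omega⟩
      else if j = 0 then 1 else 0
  | s + 1, j =>
      tauh p m s j +
        MvPolynomial.C (Polynomial.C (tseq m (j + (p : ℤ) - (s : ℤ) - 1) - tseq m (-(s : ℤ)))) *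
          tauh p m s (j - 1)

/-- the `Λ[q]`-algebra morphism `Ψ : Λ[q][h_1,...,h_{m-p}] → A` sending `h_k ↦ h_k(x|t)`,
    where `A = Λ[q][e_1(x|t),...,e_p(x|t)] / ⟨h_{m-p+1}(x|t),...,h_m(x|t)+(-1)^p q⟩`. -/
def psiMap (p m : ℕ)
    (hh : ∀ k : ℤ, fh p MvPolynomial.X (tq p m) k ∈ T0 p m) :
    MvPolynomial (Fin (m - p)) (Lq m) →ₐ[Lq m] (T0 p m ⧸ relIdeal p m hh) :=
  MvPolynomial.aeval fun i : Fin (m - p) =>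
    Ideal.Quotient.mk (relIdeal p m hh)
      (⟨fh p MvPolynomial.X (tq p m) (((i : ℕ) : ℤ) + 1), hh _⟩ : T0 p m)

def fhN (p : ℕ) (x : Fin p → R) (a : ℤ → R) (k : ℕ) : R :=
  ∑ f ∈ Finset.univ.filter (fun f : Fin k → Fin p => Monotone f),
    ∏ r : Fin k, (x (f r) - a (((f r : ℕ) : ℤ) + ((r : ℕ) : ℤ) + 1))

lemma fh_coe (p : ℕ) (x : Fin p → R) (a : ℤ → R) (k : ℕ) :
    fh p x a (k : ℤ) = fhN p x a k := by
  rw [fh, if_pos (by positivity)]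
  simp only [Int.toNat_natCast]
  rfl

lemma fh_neg (p : ℕ) (x : Fin p → R) (a : ℤ → R) {k : ℤ} (hk : k < 0) :
    fh p x a k = 0 := by
  rw [fh, if_neg (by omega)]

lemma fhN_zero (p : ℕ) (x : Fin p → R) (a : ℤ → R) : fhN p x a 0 = 1 := by
  rw [fhN, show (Finset.univ.filter (fun f : Fin 0 → Fin p => Monotone f)) = Finset.univ from
    Finset.filter_true_of_mem (fun f _ => fun i => i.elim0)]
  simp

lemma fhN_zero_vars (x : Fin 0 → R) (a : ℤ → R) (k : ℕ) : fhN 0 x a (k+1) = 0 := by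
  rw [fhN]
  convert Finset.sum_empty
  rw [Finset.eq_empty_iff_forall_notMem]
  intro f _
  exact (f 0).elim0

lemma monotone_snoc {k p : ℕ} {g : Fin k → Fin (p+1)} (hg : Monotone g) :
    Monotone (Fin.snoc g (Fin.last p) : Fin (k+1) → Fin (p+1)) := by
  intro i j hij
  rcases Fin.eq_castSucc_or_eq_last j with ⟨j', rfl⟩ | rfl
  · rcases Fin.eq_castSucc_or_eq_last i with ⟨i', rfl⟩ | rfl
    · simpa [Fin.snoc_castSucc] using hg (by simpa using hij)
    · exact absurd (lt_of_le_of_lt hij (Fin.castSucc_lt_last j')) (lt_irrefl _)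
  · simp [Fin.snoc_last, Fin.le_last]

lemma fhN_succ_succ (p k : ℕ) (x : Fin (p+1) → R) (a : ℤ → R) :
    fhN (p+1) x a (k+1) = fhN p (fun i => x i.castSucc) a (k+1)
      + (x (Fin.last p) - a ((p:ℤ) + (k:ℤ) + 1)) * fhN (p+1) x a k := by
  classical
  conv_lhs => rw [fhN]
  rw [← Finset.sum_filter_add_sum_filter_not
      (Finset.univ.filter (fun f : Fin (k+1) → Fin (p+1) => Monotone f))
      (fun f => f (Fin.last k) = Fin.last p)]
  rw [add_comm]
  congr 1
  · -- f last ≠ last p  ↔  image of monotone maps into Fin p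
    conv_rhs => rw [fhN]
    refine (Finset.sum_bij (i := fun (g : Fin (k+1) → Fin p) _ => Fin.castSucc ∘ g)
      ?_ ?_ ?_ ?_).symm
    · intro g hg
      simp only [Finset.mem_filter, Finset.mem_univ, true_and] at hg ⊢
      refine ⟨Fin.strictMono_castSucc.monotone.comp hg, ?_⟩
      exact Fin.ne_of_lt (Fin.castSucc_lt_last _)
    · intro g1 h1 g2 h2 h
      funext r
      exact Fin.castSucc_injective _ (congrFun h r)
    · intro f hf
      simp only [Finset.mem_filter, Finset.mem_univ, true_and] at hf
      obtain ⟨hmono, hne⟩ := hf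
      have hlt : ∀ r, (f r : ℕ) < p := by
        intro r
        have h1 : f r ≤ f (Fin.last k) := hmono (Fin.le_last r)
        have h2 : f (Fin.last k) < Fin.last p := Fin.lt_last_iff_ne_last.2 hne
        have := lt_of_le_of_lt h1 h2
        simpa [Fin.lt_iff_val_lt_val, Fin.val_last] using this
      refine ⟨fun r => ⟨f r, hlt r⟩, ?_, ?_⟩
      · simp only [Finset.mem_filter, Finset.mem_univ, true_and]
        intro i j hij
        exact hmono hij
      · funext r; exact Fin.ext rfl
    · intro g hg
      refine Finset.prod_congr rfl (fun r _ => ?_)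
      simp [Fin.coe_castSucc]
  · -- f last = last p part
    conv_rhs => rw [fhN]
    rw [Finset.mul_sum]
    refine (Finset.sum_bij
      (i := fun (g : Fin k → Fin (p+1)) _ => (Fin.snoc g (Fin.last p) : Fin (k+1) → Fin (p+1)))
      ?_ ?_ ?_ ?_).symm
    · intro g hg
      simp only [Finset.mem_filter, Finset.mem_univ, true_and] at hg ⊢
      exact ⟨monotone_snoc hg, Fin.snoc_last _ _⟩
    · intro g1 h1 g2 h2 h
      funext r
      have := congrFun h r.castSucc
      simpa [Fin.snoc_castSucc] using this
    · intro f hf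
      simp only [Finset.mem_filter, Finset.mem_univ, true_and] at hf
      obtain ⟨⟨hmono, hlast⟩⟩ := And.intro hf trivial
      refine ⟨Fin.init f, ?_, ?_⟩
      · simp only [Finset.mem_filter, Finset.mem_univ, true_and]
        intro i j hij
        exact hmono (by simpa [Fin.castSucc_le_castSucc_iff] using hij)
      · rw [← hlast]
        exact Fin.snoc_init_self f
    · intro g hg
      rw [Fin.prod_univ_castSucc]
      rw [mul_comm]
      congr 1
      · refine Finset.prod_congr rfl (fun r _ => ?_)
        simp [Fin.snoc_castSucc, Fin.coe_castSucc]
      · simp [Fin.snoc_last, Fin.val_last]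


lemma fh_zero' (p : ℕ) (x : Fin p → R) (a : ℤ → R) : fh p x a 0 = 1 := by
  have := fh_coe p x a 0
  rw [Nat.cast_zero] at this
  rw [this, fhN_zero]

lemma fh_rec (p : ℕ) (x : Fin (p+1) → R) (a : ℤ → R) (k : ℤ) :
    fh (p+1) x a k = fh p (fun i => x i.castSucc) a k
      + (x (Fin.last p) - a ((p:ℤ) + k)) * fh (p+1) x a (k-1) := by
  rcases lt_trichotomy k 0 with h | h | h
  · rw [fh_neg _ _ _ h, fh_neg _ _ _ h, fh_neg _ _ _ (by omega)]; ring
  · subst h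
    rw [fh_neg _ _ _ (by omega : (0:ℤ)-1 < 0), fh_zero', fh_zero']; ring
  · obtain ⟨n, rfl⟩ : ∃ n : ℕ, k = (n:ℤ)+1 := ⟨(k-1).toNat, by omega⟩
    rw [show (p:ℤ) + ((n:ℤ)+1) = (n:ℤ)+(p:ℤ)+1 from by ring,
      show (n:ℤ)+1-1 = ((n:ℕ):ℤ) from by ring,
      show (n:ℤ)+1 = ((n+1:ℕ):ℤ) from by push_cast; ring,
      fh_coe, fh_coe, fh_coe, fhN_succ_succ]
    ring_nf

lemma fh_nilvars (x : Fin 0 → R) (a : ℤ → R) {k : ℤ} (hk : 1 ≤ k) : fh 0 x a k = 0 := by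
  obtain ⟨n, rfl⟩ : ∃ n : ℕ, k = ((n+1:ℕ):ℤ) := ⟨(k-1).toNat, by omega⟩
  rw [fh_coe, fhN_zero_vars]

lemma fh_shift (p : ℕ) : ∀ (x : Fin p → R) (a : ℤ → R) (k : ℤ),
    fh p x (shiftSeq a (-1)) k
      = fh p x a k + (a (k + (p:ℤ) - 1) - a 0) * fh p x a (k-1) := by
  induction p with
  | zero =>
    intro x a k
    rcases lt_trichotomy k 0 with h | h | h
    · rw [fh_neg _ _ _ h, fh_neg _ _ _ h, fh_neg _ _ _ (by omega)]; ring
    · subst h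
      rw [fh_zero', fh_zero', fh_neg _ _ _ (by omega : (0:ℤ)-1 < 0)]; ring
    · rcases eq_or_lt_of_le (show (1:ℤ) ≤ k by omega) with h1 | h1
      · have hk : k = 1 := by omega
        rw [fh_nilvars _ _ (by omega), fh_nilvars _ _ (by omega),
          show k + ((0:ℕ):ℤ) - 1 = 0 from by push_cast; omega,
          show k - 1 = 0 from by omega, fh_zero']
        ring
      · rw [fh_nilvars _ _ (by omega), fh_nilvars _ _ (by omega), fh_nilvars _ _ (by omega)]
        ring
  | succ p ih =>
    intro x a
    set x' : Fin p → R := fun i => x i.castSucc with hx'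
    have main : ∀ n : ℕ, fh (p+1) x (shiftSeq a (-1)) ((n:ℕ):ℤ)
        = fh (p+1) x a ((n:ℕ):ℤ)
          + (a ((n:ℤ) + (p:ℤ)) - a 0) * fh (p+1) x a (((n:ℕ):ℤ)-1) := by
      intro n
      induction n with
      | zero =>
        rw [Nat.cast_zero, fh_zero', fh_zero', fh_neg _ _ _ (by omega : (0:ℤ)-1 < 0)]; ring
      | succ n ihn =>
        push_cast
        have E1 : fh (p+1) x (shiftSeq a (-1)) ((n:ℤ)+1)
            = fh p x' (shiftSeq a (-1)) ((n:ℤ)+1)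
              + (x (Fin.last p) - a ((n:ℤ)+(p:ℤ))) * fh (p+1) x (shiftSeq a (-1)) (n:ℤ) := by
          have := fh_rec p x (shiftSeq a (-1)) ((n:ℤ)+1)
          rw [show ((n:ℤ)+1-1) = (n:ℤ) from by ring] at this
          have hs : shiftSeq a (-1) ((p:ℤ)+((n:ℤ)+1)) = a ((n:ℤ)+(p:ℤ)) := by
            show a (((p:ℤ)+((n:ℤ)+1)) + -1) = a ((n:ℤ)+(p:ℤ))
            exact congrArg a (by ring)
          rw [hs] at this
          exact this
        have E2 : fh p x' (shiftSeq a (-1)) ((n:ℤ)+1)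
            = fh p x' a ((n:ℤ)+1) + (a ((n:ℤ)+(p:ℤ)) - a 0) * fh p x' a (n:ℤ) := by
          have := ih x' a ((n:ℤ)+1)
          rw [show (n:ℤ)+1+(p:ℤ)-1 = (n:ℤ)+(p:ℤ) from by ring,
            show (n:ℤ)+1-1 = (n:ℤ) from by ring] at this
          exact this
        have E3 : fh (p+1) x (shiftSeq a (-1)) (n:ℤ)
            = fh (p+1) x a (n:ℤ) + (a ((n:ℤ)+(p:ℤ)) - a 0) * fh (p+1) x a ((n:ℤ)-1) := ihn
        have E4 : fh (p+1) x a (n:ℤ)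
            = fh p x' a (n:ℤ) + (x (Fin.last p) - a ((n:ℤ)+(p:ℤ))) * fh (p+1) x a ((n:ℤ)-1) := by
          have := fh_rec p x a (n:ℤ)
          rw [show (p:ℤ)+(n:ℤ) = (n:ℤ)+(p:ℤ) from by ring] at this
          exact this
        have E5 : fh (p+1) x a ((n:ℤ)+1)
            = fh p x' a ((n:ℤ)+1)
              + (x (Fin.last p) - a ((n:ℤ)+(p:ℤ)+1)) * fh (p+1) x a (n:ℤ) := by
          have := fh_rec p x a ((n:ℤ)+1)
          rw [show (p:ℤ)+((n:ℤ)+1) = (n:ℤ)+(p:ℤ)+1 from by ring,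
            show (n:ℤ)+1-1 = (n:ℤ) from by ring] at this
          exact this
        rw [show (n:ℤ)+1+(p:ℤ) = (n:ℤ)+(p:ℤ)+1 from by ring,
          show (n:ℤ)+1-1 = (n:ℤ) from by ring,
          E1, E2, E3, E5, E4]
        ring
    intro k
    rcases le_or_gt 0 k with h | h
    · obtain ⟨n, rfl⟩ : ∃ n : ℕ, k = ((n:ℕ):ℤ) := ⟨k.toNat, by omega⟩
      rw [main n]
      congr 3
      push_cast; ring
    · rw [fh_neg _ _ _ h, fh_neg _ _ _ h, fh_neg _ _ _ (by omega)]; ring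

/-- `Ψ(τ^{-s}h_j) = h_j(x|τ^{-s}t)` in `A` for all `s ≥ 0` and `j < m`,
    and `Ψ(τ^{-(m-1)}h_m) = h_m(x|τ^{-(m-1)}t) + (-1)^p q` in `A`. -/
theorem psi_tauh (p m : ℕ) (hp : 0 < p) (hpm : p ≤ m)
    (hh : ∀ k : ℤ, fh p MvPolynomial.X (tq p m) k ∈ T0 p m)
    (hh2 : ∀ (s : ℕ) (j : ℤ),
      fh p MvPolynomial.X (shiftSeq (tq p m) (-(s : ℤ))) j ∈ T0 p m) :
    (∀ (s : ℕ) (j : ℤ), j < (m : ℤ) →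
      psiMap p m hh (tauh p m s j) =
        Ideal.Quotient.mk (relIdeal p m hh)
          (⟨fh p MvPolynomial.X (shiftSeq (tq p m) (-(s : ℤ))) j, hh2 s j⟩ : T0 p m)) ∧
    psiMap p m hh (tauh p m (m - 1) (m : ℤ)) =
      Ideal.Quotient.mk (relIdeal p m hh)
        (⟨fh p MvPolynomial.X (shiftSeq (tq p m) (-((m - 1 : ℕ) : ℤ))) (m : ℤ) +
            algebraMap (Lq m) (Sx p m) ((-1) ^ p * Polynomial.X),
          (T0 p m).add_mem (hh2 (m - 1) (m : ℤ)) ((T0 p m).algebraMap_mem _)⟩ : T0 p m) := by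
  classical
  set mkq := Ideal.Quotient.mk (relIdeal p m hh) with hmkq
  have fh_congr : ∀ {a b : ℤ → Sx p m} {k l : ℤ}, a = b → k = l →
      fh p MvPolynomial.X a k = fh p MvPolynomial.X b l := by
    rintro a b k l rfl rfl; rfl
  have mk_eq : ∀ {v w : Sx p m} (hv : v ∈ T0 p m) (hw : w ∈ T0 p m), v = w →
      mkq ⟨v, hv⟩ = mkq ⟨w, hw⟩ := by
    rintro v w hv hw h
    exact congrArg mkq (Subtype.ext h)
  have shift0 : shiftSeq (tq p m) (-((0:ℕ):ℤ)) = tq p m := by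
    funext n
    show tq p m (n + -((0:ℕ):ℤ)) = tq p m n
    norm_num
  have shiftS : ∀ s : ℕ, shiftSeq (shiftSeq (tq p m) (-(s:ℤ))) (-1)
      = shiftSeq (tq p m) (-((s+1:ℕ):ℤ)) := by
    intro s
    funext n
    show tq p m (n + -1 + -(s:ℤ)) = tq p m (n + -((s+1:ℕ):ℤ))
    exact congrArg _ (by push_cast; ring)
  have G1 : ∀ j : ℤ, (m:ℤ) - (p:ℤ) < j → j < (m:ℤ) →
      mkq ⟨fh p MvPolynomial.X (tq p m) j, hh j⟩ = 0 := by
    intro j h1 h2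
    have hp2 : 2 ≤ p := by omega
    have hjk : 0 ≤ j - ((m:ℤ)-(p:ℤ)+1) := by omega
    have hk : ((j - ((m:ℤ)-(p:ℤ)+1)).toNat : ℤ) = j - ((m:ℤ)-(p:ℤ)+1) :=
      Int.toNat_of_nonneg hjk
    rw [hmkq, Ideal.Quotient.eq_zero_iff_mem]
    refine Ideal.subset_span (Set.mem_union_left _
      ⟨⟨(j - ((m:ℤ)-(p:ℤ)+1)).toNat, by omega⟩, ?_⟩)
    exact Subtype.ext (fh_congr rfl (by push_cast [hk]; ring))
  have G2 : mkq ⟨fh p MvPolynomial.X (tq p m) (m:ℤ) +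
      algebraMap (Lq m) (Sx p m) ((-1) ^ p * Polynomial.X),
      (T0 p m).add_mem (hh _) ((T0 p m).algebraMap_mem _)⟩ = 0 := by
    rw [hmkq, Ideal.Quotient.eq_zero_iff_mem]
    exact Ideal.subset_span (Set.mem_union_right _ rfl)
  have hv : ∀ (s : ℕ) (j : ℤ),
      fh p MvPolynomial.X (shiftSeq (tq p m) (-((s+1:ℕ):ℤ))) j
        = fh p MvPolynomial.X (shiftSeq (tq p m) (-(s:ℤ))) j
          + MvPolynomial.C (Polynomial.C (tseq m (j + (p:ℤ) - (s:ℤ) - 1) - tseq m (-(s:ℤ))))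
            * fh p MvPolynomial.X (shiftSeq (tq p m) (-(s:ℤ))) (j-1) := by
    intro s j
    have hc : shiftSeq (tq p m) (-(s:ℤ)) (j + (p:ℤ) - 1) - shiftSeq (tq p m) (-(s:ℤ)) 0
        = MvPolynomial.C (Polynomial.C (tseq m (j + (p:ℤ) - (s:ℤ) - 1) - tseq m (-(s:ℤ)))) := by
      show MvPolynomial.C (Polynomial.C (tseq m (j + (p:ℤ) - 1 + -(s:ℤ))))
          - MvPolynomial.C (Polynomial.C (tseq m (0 + -(s:ℤ)))) = _
      rw [show j + (p:ℤ) - 1 + -(s:ℤ) = j + (p:ℤ) - (s:ℤ) - 1 from by ring,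
        show (0:ℤ) + -(s:ℤ) = -(s:ℤ) from by ring, map_sub, map_sub]
    rw [← shiftS s, fh_shift, hc]
  have hC : ∀ c : Lq m, psiMap p m hh (MvPolynomial.C c)
      = algebraMap (Lq m) (T0 p m ⧸ relIdeal p m hh) c := fun c =>
    MvPolynomial.aeval_C _ c
  have key : ∀ s : ℕ,
      (∀ j : ℤ, j < (m:ℤ) → psiMap p m hh (tauh p m s j) =
        mkq ⟨fh p MvPolynomial.X (shiftSeq (tq p m) (-(s:ℤ))) j, hh2 s j⟩) ∧
      psiMap p m hh (tauh p m s (m:ℤ)) =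
        mkq ⟨fh p MvPolynomial.X (shiftSeq (tq p m) (-(s:ℤ))) (m:ℤ) +
          algebraMap (Lq m) (Sx p m) ((-1) ^ p * Polynomial.X),
          (T0 p m).add_mem (hh2 s _) ((T0 p m).algebraMap_mem _)⟩ := by
    intro s
    induction s with
    | zero =>
      constructor
      · intro j hj
        by_cases h1 : 1 ≤ j ∧ j ≤ ((m-p:ℕ):ℤ)
        · simp only [tauh]
          rw [dif_pos h1]
          rw [show psiMap p m hh (MvPolynomial.X ⟨(j-1).toNat, by omega⟩) =
            mkq ⟨fh p MvPolynomial.X (tq p m)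
              (((((⟨(j-1).toNat, by omega⟩ : Fin (m-p)) : ℕ)) : ℤ) + 1), hh _⟩ from
            MvPolynomial.aeval_X _ _]
          exact mk_eq _ _ (fh_congr shift0.symm (by simp only [Fin.val_mk]; omega))
        · by_cases h2 : j = 0
          · subst h2
            simp only [tauh]
            rw [dif_neg h1, if_pos trivial, map_one]
            have h3 : (⟨fh p MvPolynomial.X (shiftSeq (tq p m) (-((0:ℕ):ℤ))) 0,
                hh2 0 0⟩ : T0 p m) = 1 := Subtype.ext (by
              show fh p MvPolynomial.X (shiftSeq (tq p m) (-((0:ℕ):ℤ))) 0 = ((1 : T0 p m) : Sx p m)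
              rw [fh_zero']; rfl)
            rw [h3, map_one]
          · simp only [tauh]
            rw [dif_neg h1, if_neg h2, map_zero]
            rcases lt_or_ge j 0 with h3 | h3
            · have h4 : (⟨fh p MvPolynomial.X (shiftSeq (tq p m) (-((0:ℕ):ℤ))) j,
                  hh2 0 j⟩ : T0 p m) = 0 := Subtype.ext (by
                show fh p MvPolynomial.X (shiftSeq (tq p m) (-((0:ℕ):ℤ))) j = ((0 : T0 p m) : Sx p m)
                rw [fh_neg _ _ _ h3]; rfl)
              rw [h4, map_zero]
            · rw [mk_eq (hh2 0 j) (hh j) (fh_congr shift0 rfl)]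
              exact (G1 j (by omega) hj).symm
      · simp only [tauh]
        rw [dif_neg (by omega), if_neg (by omega), map_zero]
        rw [mk_eq ((T0 p m).add_mem (hh2 0 _) ((T0 p m).algebraMap_mem _))
          ((T0 p m).add_mem (hh _) ((T0 p m).algebraMap_mem _))
          (by rw [fh_congr shift0 rfl])]
        exact G2.symm
    | succ s ih =>
      have step : ∀ j : ℤ, psiMap p m hh (tauh p m (s+1) j) =
          psiMap p m hh (tauh p m s j) +
          algebraMap (Lq m) (T0 p m ⧸ relIdeal p m hh)
            (Polynomial.C (tseq m (j + (p:ℤ) - (s:ℤ) - 1) - tseq m (-(s:ℤ)))) *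
          psiMap p m hh (tauh p m s (j-1)) := by
        intro j
        simp only [tauh]
        rw [map_add, map_mul, hC]
      constructor
      · intro j hj
        rw [step j, ih.1 j hj, ih.1 (j-1) (by omega), ← Ideal.Quotient.mk_algebraMap,
          ← hmkq, ← map_mul, ← map_add]
        refine congrArg mkq (Subtype.ext ?_)
        show (fh p MvPolynomial.X (shiftSeq (tq p m) (-(s:ℤ))) j
            + algebraMap (Lq m) (Sx p m)
                (Polynomial.C (tseq m (j + (p:ℤ) - (s:ℤ) - 1) - tseq m (-(s:ℤ))))
              * fh p MvPolynomial.X (shiftSeq (tq p m) (-(s:ℤ))) (j-1) : Sx p m)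
          = fh p MvPolynomial.X (shiftSeq (tq p m) (-((s+1:ℕ):ℤ))) j
        rw [hv s j]
        rfl
      · rw [step (m:ℤ), ih.2, ih.1 ((m:ℤ)-1) (by omega), ← Ideal.Quotient.mk_algebraMap,
          ← hmkq, ← map_mul, ← map_add]
        refine congrArg mkq (Subtype.ext ?_)
        show ((fh p MvPolynomial.X (shiftSeq (tq p m) (-(s:ℤ))) (m:ℤ)
              + algebraMap (Lq m) (Sx p m) ((-1) ^ p * Polynomial.X))
            + algebraMap (Lq m) (Sx p m)
                (Polynomial.C (tseq m ((m:ℤ) + (p:ℤ) - (s:ℤ) - 1) - tseq m (-(s:ℤ))))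
              * fh p MvPolynomial.X (shiftSeq (tq p m) (-(s:ℤ))) ((m:ℤ)-1) : Sx p m)
          = fh p MvPolynomial.X (shiftSeq (tq p m) (-((s+1:ℕ):ℤ))) (m:ℤ)
            + algebraMap (Lq m) (Sx p m) ((-1) ^ p * Polynomial.X)
        rw [hv s (m:ℤ)]
        rw [show algebraMap (Lq m) (Sx p m)
            (Polynomial.C (tseq m ((m:ℤ) + (p:ℤ) - (s:ℤ) - 1) - tseq m (-(s:ℤ))))
          = MvPolynomial.C (Polynomial.C (tseq m ((m:ℤ) + (p:ℤ) - (s:ℤ) - 1)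
            - tseq m (-(s:ℤ)))) from rfl]
        ring
  refine ⟨fun s j hj => (key s).1 j hj, (key (m-1)).2⟩
end
end
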